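/- arXiv:2301.03230 — 2 statements merged into one kernel-verified Lean document; each statement's English description precedes it below -/
import Mathlib

section
/- For all g ≥ 1 and q ≥ 1, the domination number of G_q(g) equals ((q²+2q−1)/(q+3)) · ((q+1)(q+2)/2)^{g−1} + 2(q+2)/(q+3). -/
set_option linter.unusedSectionVars false
set_option maxHeartbeats 1000000
open Finset
variable {V : Type} [Fintype V]

def IsVC {V : Type} (G : SimpleGraph V) (S : Finset V) : Prop :=
  ∀ ⦃u v : V⦄, G.Adj u v → u ∈ S ∨ v ∈ S

/-- Edge corona product `G ⊛ K_q`: keep `G`, and for each edge of `G` add a fresh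
copy of the complete graph on `q` vertices, joining all its vertices to both
endpoints of the edge. -/
def edgeCorona {V : Type} (G : SimpleGraph V) (q : ℕ) :
    SimpleGraph (V ⊕ (G.edgeSet × Fin q)) where
  Adj := fun x y => match x, y with
    | Sum.inl u, Sum.inl v => G.Adj u v
    | Sum.inl u, Sum.inr p => u ∈ (p.1 : Sym2 V)
    | Sum.inr p, Sum.inl v => v ∈ (p.1 : Sym2 V)
    | Sum.inr p, Sum.inr r => p.1 = r.1 ∧ p.2 ≠ r.2
  symm := by
    refine ⟨?_⟩
    rintro (u | p) (v | r) h
    · exact G.adj_symm h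
    · exact h
    · exact h
    · exact ⟨h.1.symm, h.2.symm⟩
  loopless := by
    refine ⟨?_⟩
    rintro (u | p) h
    · exact G.irrefl h
    · exact h.2 rfl

-- lower bound for covers of the corona
lemma card_vc_edgeCorona (G : SimpleGraph V) [Fintype G.edgeSet] (q : ℕ) (hq : 1 ≤ q)
    (hiso : ∀ v : V, ∃ w, G.Adj v w) (S' : Finset (V ⊕ (G.edgeSet × Fin q)))
    (hS' : IsVC (edgeCorona G q) S') :
    (q - 1) * Fintype.card G.edgeSet + Fintype.card V ≤ S'.card := by
  classical
  set A := S'.toLeft with hA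
  set B := S'.toRight with hB
  have hcardsplit : A.card + B.card = S'.card := card_toLeft_add_card_toRight
  have hAvc : IsVC G A := by
    intro u v huv
    have := hS' (u := Sum.inl u) (v := Sum.inl v) huv
    simpa [hA, mem_toLeft] using this
  -- fibers of B
  set Ie : G.edgeSet → Finset (Fin q) := fun e => univ.filter (fun i => (e, i) ∈ B) with hIe
  have hfib : ∀ e : G.edgeSet, (B.filter (fun p => p.1 = e)).card = (Ie e).card := by
    intro e
    refine Finset.card_bij (fun p _ => p.2) ?_ ?_ ?_
    · rintro ⟨e', i⟩ hp
      simp only [mem_filter] at hp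
      obtain ⟨hp1, hp2⟩ := hp
      simp only [hIe, mem_filter, mem_univ, true_and]
      cases hp2; exact hp1
    · rintro ⟨e1, i1⟩ h1 ⟨e2, i2⟩ h2 h
      simp only [mem_filter] at h1 h2
      simp only at h
      exact Prod.ext (h1.2.trans h2.2.symm) h
    · intro i hi
      simp only [hIe, mem_filter, mem_univ, true_and] at hi
      exact ⟨(e, i), by simp [hi], rfl⟩
  have hIecompl : ∀ e : G.edgeSet, ((univ : Finset (Fin q)) \ Ie e).card ≤ 1 := by
    intro e
    by_contra hcon
    push_neg at hcon
    obtain ⟨i, hi, j, hj, hij⟩ := Finset.one_lt_card.mp hcon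
    simp only [hIe, mem_sdiff, mem_filter, mem_univ, true_and, not_and] at hi hj
    have hadj : (edgeCorona G q).Adj (Sum.inr (e, i)) (Sum.inr (e, j)) := ⟨rfl, hij⟩
    rcases hS' hadj with h | h
    · exact hi (by simpa [hB, mem_toRight] using h)
    · exact hj (by simpa [hB, mem_toRight] using h)
  have hIelb : ∀ e : G.edgeSet, q - 1 ≤ (Ie e).card := by
    intro e
    have h1 : ((univ : Finset (Fin q)) \ Ie e).card = q - (Ie e).card := by
      rw [card_sdiff_of_subset (subset_univ _), card_univ, Fintype.card_fin]
    have h2 := hIecompl e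
    have h3 : (Ie e).card ≤ q := by
      simpa using card_le_card (subset_univ (Ie e))
    omega
  -- special edges
  set T : Finset G.edgeSet := univ.filter (fun e => ∃ v, v ∈ (e : Sym2 V) ∧ v ∉ A) with hT
  have hIefull : ∀ e ∈ T, (Ie e).card = q := by
    intro e he
    simp only [hT, mem_filter, mem_univ, true_and] at he
    obtain ⟨v, hv, hvA⟩ := he
    have : Ie e = univ := by
      refine eq_univ_iff_forall.mpr fun i => ?_
      simp only [hIe, mem_filter, mem_univ, true_and]
      by_contra hi
      have hadj : (edgeCorona G q).Adj (Sum.inr (e, i)) (Sum.inl v) := hv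
      rcases hS' hadj with h | h
      · exact hi (by simpa [hB, mem_toRight] using h)
      · exact hvA (by simpa [hA, mem_toLeft] using h)
    rw [this, card_univ, Fintype.card_fin]
  -- outside vertices inject into T
  have houtside : (univ \ A).card ≤ T.card := by
    have hgfun : ∀ v : V, ∃ e : G.edgeSet, v ∈ (e : Sym2 V) := by
      intro v
      obtain ⟨w, hw⟩ := hiso v
      exact ⟨⟨s(v, w), hw⟩, Sym2.mem_mk_left v w⟩
    choose gfun hgmem using hgfun
    refine Finset.card_le_card_of_injOn gfun ?_ ?_
    · intro v hv
      simp only [mem_coe, mem_sdiff, mem_univ, true_and] at hv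
      simp only [mem_coe, hT, mem_filter, mem_univ, true_and]
      exact ⟨v, hgmem v, hv⟩
    · intro v hv v' hv' heq
      simp only [coe_sdiff, coe_univ, Set.mem_diff, Set.mem_univ, true_and, mem_coe] at hv hv'
      by_contra hne
      have hv'mem : v' ∈ (gfun v : Sym2 V) := heq ▸ hgmem v'
      have hvmem : v ∈ (gfun v : Sym2 V) := hgmem v
      have hedge : ((gfun v : G.edgeSet) : Sym2 V) = s(v, v') :=
        (Sym2.mem_and_mem_iff hne).mp ⟨hvmem, hv'mem⟩
      have hadj : G.Adj v v' := G.mem_edgeSet.mp (hedge ▸ (gfun v).2)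
      rcases hAvc hadj with h | h
      · exact hv h
      · exact hv' h
  -- put everything together
  have hBcard : B.card = ∑ e : G.edgeSet, (B.filter (fun p => p.1 = e)).card :=
    card_eq_sum_card_fiberwise (fun p _ => mem_univ p.1)
  have hBge : (q - 1) * Fintype.card G.edgeSet + T.card ≤ B.card := by
    rw [hBcard]
    have : ∀ e : G.edgeSet, (q - 1) + (if e ∈ T then 1 else 0) ≤ (B.filter (fun p => p.1 = e)).card := by
      intro e
      rw [hfib e]
      by_cases he : e ∈ T
      · rw [if_pos he, hIefull e he]; omega
      · rw [if_neg he]; simpa using hIelb e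
    calc (q - 1) * Fintype.card G.edgeSet + T.card
        = ∑ e : G.edgeSet, ((q - 1) + (if e ∈ T then 1 else 0)) := by
          rw [Finset.sum_add_distrib, Finset.sum_const, card_univ, smul_eq_mul,
            Finset.sum_ite_mem, Finset.univ_inter, Finset.sum_const, smul_eq_mul, mul_one,
            Nat.mul_comm]
      _ ≤ ∑ e : G.edgeSet, (B.filter (fun p => p.1 = e)).card := Finset.sum_le_sum (fun e _ => this e)
  have hout : (univ \ A).card = Fintype.card V - A.card := by
    rw [card_sdiff_of_subset (subset_univ _), card_univ]
  have hAle : A.card ≤ Fintype.card V := by simpa using card_le_card (subset_univ A)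
  omega

noncomputable def tau {V : Type} (G : SimpleGraph V) : ℕ :=
  sInf {n | ∃ S : Finset V, IsVC G S ∧ S.card = n}

lemma isVC_univ (G : SimpleGraph V) : IsVC G univ := fun u _ _ => Or.inl (mem_univ u)

lemma tau_le {G : SimpleGraph V} {S : Finset V} (h : IsVC G S) : tau G ≤ S.card :=
  Nat.sInf_le ⟨S, h, rfl⟩

lemma le_tau {G : SimpleGraph V} {m : ℕ} (h : ∀ S : Finset V, IsVC G S → m ≤ S.card) :
    m ≤ tau G :=
  le_csInf ⟨_, univ, isVC_univ G, rfl⟩ (by rintro n ⟨S, hS, rfl⟩; exact h S hS)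

lemma tau_edgeCorona (G : SimpleGraph V) [Fintype G.edgeSet] (q : ℕ) (hq : 1 ≤ q)
    (hiso : ∀ v : V, ∃ w, G.Adj v w) :
    tau (edgeCorona G q) = (q - 1) * Fintype.card G.edgeSet + Fintype.card V := by
  classical
  apply le_antisymm
  · -- upper bound: all of V plus q-1 copies per edge
    set i0 : Fin q := ⟨0, hq⟩ with hi0
    set S' : Finset (V ⊕ (G.edgeSet × Fin q)) :=
      (univ.image Sum.inl) ∪ ((univ ×ˢ ((univ : Finset (Fin q)).erase i0)).image Sum.inr)
      with hS'
    have hvc : IsVC (edgeCorona G q) S' := by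
      rintro (u | p) (v | r) hadj
      · exact Or.inl (by simp [hS'])
      · exact Or.inl (by simp [hS'])
      · exact Or.inr (by simp [hS'])
      · have hne : p.2 ≠ r.2 := hadj.2
        rcases ne_or_eq p.2 i0 with h | h
        · refine Or.inl ?_
          simp only [hS', mem_union, mem_image, mem_product, mem_erase, mem_univ, true_and]
          exact Or.inr ⟨p, ⟨h, trivial⟩, by simp⟩
        · refine Or.inr ?_
          simp only [hS', mem_union, mem_image, mem_product, mem_erase, mem_univ, true_and]
          exact Or.inr ⟨r, ⟨fun hr => hne (h.trans hr.symm), trivial⟩, by simp⟩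
    have hcard : S'.card = (q - 1) * Fintype.card G.edgeSet + Fintype.card V := by
      rw [hS', card_union_of_disjoint, card_image_of_injective _ Sum.inl_injective,
        card_image_of_injective _ Sum.inr_injective, card_univ, card_product,
        card_erase_of_mem (mem_univ _), card_univ, card_univ, Fintype.card_fin]
      · ring
      · simp [disjoint_left]
    exact hcard ▸ tau_le hvc
  · exact le_tau fun S' hS' => card_vc_edgeCorona G q hq hiso S' hS'

lemma tau_top (n : ℕ) : tau (⊤ : SimpleGraph (Fin (n + 2))) = n + 1 := by
  classical
  apply le_antisymm
  · have hvc : IsVC (⊤ : SimpleGraph (Fin (n + 2))) (univ.erase 0) := by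
      intro u v huv
      have hne : u ≠ v := huv.ne
      rcases ne_or_eq u 0 with h | h
      · exact Or.inl (mem_erase.mpr ⟨h, mem_univ u⟩)
      · exact Or.inr (mem_erase.mpr ⟨fun hv => hne (h.trans hv.symm), mem_univ v⟩)
    have := tau_le hvc
    rwa [card_erase_of_mem (mem_univ _), card_univ, Fintype.card_fin] at this
  · refine le_tau fun S hS => ?_
    by_contra hlt
    push_neg at hlt
    -- complement of S has ≥ 2 elements
    have hcompl : 2 ≤ (univ \ S).card := by
      rw [card_sdiff_of_subset (subset_univ _), card_univ, Fintype.card_fin]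
      omega
    obtain ⟨u, hu, v, hv, huv⟩ := Finset.one_lt_card.mp hcompl
    simp only [mem_sdiff, mem_univ, true_and] at hu hv
    have : (⊤ : SimpleGraph (Fin (n+2))).Adj u v := huv
    rcases hS this with h | h
    · exact hu h
    · exact hv h

lemma degree_edgeCorona_inl (G : SimpleGraph V) [Fintype G.edgeSet] (q : ℕ)
    [DecidableRel G.Adj] [DecidableRel (edgeCorona G q).Adj] (u : V) :
    (edgeCorona G q).degree (Sum.inl u) = (q + 1) * G.degree u := by
  classical
  have hnb : (edgeCorona G q).neighborFinset (Sum.inl u) =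
      ((G.neighborFinset u).image Sum.inl) ∪
        ((univ.filter (fun p : G.edgeSet × Fin q => u ∈ (p.1 : Sym2 V))).image Sum.inr) := by
    ext (v | p) <;> rw [SimpleGraph.mem_neighborFinset] <;>
      simp [SimpleGraph.mem_neighborFinset, edgeCorona, SimpleGraph.Adj]
  have hfilter : (univ.filter (fun p : G.edgeSet × Fin q => u ∈ (p.1 : Sym2 V))) =
      (univ.filter (fun e : G.edgeSet => u ∈ (e : Sym2 V))) ×ˢ univ := by
    ext p; simp
  have hinc : (univ.filter (fun e : G.edgeSet => u ∈ (e : Sym2 V))).card = G.degree u := by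
    rw [← SimpleGraph.card_incidenceFinset_eq_degree]
    refine Finset.card_bij (fun e _ => (e : Sym2 V)) ?_ ?_ ?_
    · rintro ⟨e, he⟩ h
      simp only [mem_filter, mem_univ, true_and] at h
      rw [SimpleGraph.mem_incidenceFinset]
      exact ⟨he, h⟩
    · rintro ⟨e1, he1⟩ h1 ⟨e2, he2⟩ h2 h
      exact Subtype.ext h
    · intro e he
      rw [SimpleGraph.mem_incidenceFinset] at he
      exact ⟨⟨e, he.1⟩, by simp [he.2], rfl⟩
  rw [SimpleGraph.degree, hnb, card_union_of_disjoint (by simp [disjoint_left]),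
    card_image_of_injective _ Sum.inl_injective, card_image_of_injective _ Sum.inr_injective,
    hfilter, card_product, hinc, card_univ, Fintype.card_fin]
  have : #(G.neighborFinset u) = G.degree u := rfl
  rw [this]; ring

lemma degree_edgeCorona_inr (G : SimpleGraph V) [Fintype G.edgeSet] (q : ℕ)
    [DecidableRel (edgeCorona G q).Adj] (p : G.edgeSet × Fin q) :
    (edgeCorona G q).degree (Sum.inr p) = q + 1 := by
  classical
  obtain ⟨⟨e, he⟩, i⟩ := p
  induction e with
  | _ a b =>
    have hab : G.Adj a b := he
    have hnb : (edgeCorona G q).neighborFinset (Sum.inr (⟨s(a,b), he⟩, i)) =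
        (({a, b} : Finset V).image Sum.inl) ∪
          ((univ.erase i).image (fun j => (Sum.inr (⟨s(a,b), he⟩, j) : V ⊕ (G.edgeSet × Fin q)))) := by
      ext (v | r)
      · rw [SimpleGraph.mem_neighborFinset]
        simp [SimpleGraph.mem_neighborFinset, edgeCorona, Sym2.mem_iff, eq_comm]
      · simp only [SimpleGraph.mem_neighborFinset, mem_union, mem_image, mem_insert,
          mem_singleton, mem_erase, mem_univ, and_true]
        constructor
        · rintro ⟨h1, h2⟩
          refine Or.inr ⟨r.2, fun hri => h2 hri.symm, ?_⟩
          obtain ⟨r1, r2⟩ := r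
          simp only at h1 ⊢
          rw [h1]
        · rintro (⟨v, hv, hvr⟩ | ⟨j, hj, hjr⟩)
          · exact absurd hvr (by simp)
          · obtain ⟨r1, r2⟩ := r
            have h1 := congrArg (fun x => match x with | Sum.inr y => y.1 | Sum.inl _ => r1) hjr
            have h2 := congrArg (fun x => match x with | Sum.inr y => y.2 | Sum.inl _ => r2) hjr
            simp only at h1 h2
            exact ⟨h1.symm ▸ rfl, by rw [← h2]; exact fun hc => hj hc.symm⟩
    rw [SimpleGraph.degree, hnb, card_union_of_disjoint (by simp [disjoint_left]),
      card_image_of_injective _ Sum.inl_injective,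
      card_image_of_injective _ (fun x y hxy => by simpa using hxy),
      card_erase_of_mem (mem_univ _), card_univ, Fintype.card_fin,
      card_insert_of_notMem (by simpa using hab.ne), card_singleton]
    have := i.isLt
    omega

lemma card_edgeSet_edgeCorona (G : SimpleGraph V) [Fintype G.edgeSet] (q : ℕ)
    [Fintype (edgeCorona G q).edgeSet] [DecidableRel G.Adj] :
    2 * Fintype.card (edgeCorona G q).edgeSet =
      (q + 1) * (q + 2) * Fintype.card G.edgeSet := by
  classical
  haveI : DecidableRel (edgeCorona G q).Adj := Classical.decRel _
  have hsum := SimpleGraph.sum_degrees_eq_twice_card_edges (edgeCorona G q)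
  rw [Fintype.sum_sum_type] at hsum
  have h1 : ∑ u : V, (edgeCorona G q).degree (Sum.inl u) = (q + 1) * (2 * Fintype.card G.edgeSet) := by
    have : ∀ u : V, (edgeCorona G q).degree (Sum.inl u) = (q + 1) * G.degree u :=
      degree_edgeCorona_inl G q
    rw [Finset.sum_congr rfl (fun u _ => this u), ← Finset.mul_sum,
      SimpleGraph.sum_degrees_eq_twice_card_edges, SimpleGraph.edgeFinset, Set.toFinset_card]
    congr!
  have h2 : ∑ p : G.edgeSet × Fin q, (edgeCorona G q).degree (Sum.inr p) =
      Fintype.card G.edgeSet * q * (q + 1) := by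
    rw [Finset.sum_congr rfl (fun p _ => degree_edgeCorona_inr G q p), Finset.sum_const,
      card_univ, Fintype.card_prod, Fintype.card_fin, smul_eq_mul]
  rw [h1, h2] at hsum
  rw [SimpleGraph.edgeFinset, Set.toFinset_card] at hsum
  have h4 : 2 * Fintype.card (edgeCorona G q).edgeSet =
      (q + 1) * (2 * Fintype.card G.edgeSet) + Fintype.card G.edgeSet * q * (q + 1) := by
    rw [hsum]
    congr!
  rw [h4]
  ring

/-- The simplicial network `G_q(g)` together with its vertex type:
`G_q(0) = K_{q+2}` and `G_q(g+1) = G_q(g) ⊛ K_q`. -/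
def Gaux (q : ℕ) : ℕ → Σ V : Type, SimpleGraph V
  | 0 => ⟨Fin (q + 2), ⊤⟩
  | g + 1 => ⟨_, edgeCorona (Gaux q g).2 q⟩

abbrev GVert (q g : ℕ) : Type := (Gaux q g).1

abbrev Gnet (q g : ℕ) : SimpleGraph (GVert q g) := (Gaux q g).2

/-- The `q+2` hub nodes of `G_q(g)`: the vertices present from iteration `0`. -/
def hub (q : ℕ) : (g : ℕ) → Fin (q + 2) → GVert q g
  | 0 => id
  | g + 1 => fun k => Sum.inl (hub q g k)

lemma card_inst_irrel {α : Type*} (i1 i2 : Fintype α) :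
    @Fintype.card α i1 = @Fintype.card α i2 := @Fintype.card_congr _ _ i1 i2 (Equiv.refl _)

noncomputable instance instFintypeGVert (q : ℕ) : ∀ g, Fintype (GVert q g)
  | 0 => inferInstanceAs (Fintype (Fin (q + 2)))
  | g + 1 =>
    letI := instFintypeGVert q g
    letI : DecidableEq (GVert q g) := Classical.decEq _
    letI : DecidableRel (Gnet q g).Adj := Classical.decRel _
    inferInstanceAs (Fintype (GVert q g ⊕ ((Gnet q g).edgeSet × Fin q)))

noncomputable def fintypeEdge (q g : ℕ) : Fintype ((Gnet q g).edgeSet) := by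
  classical
  exact SimpleGraph.fintypeEdgeSet _

noncomputable def nn (q g : ℕ) : ℕ := Fintype.card (GVert q g)
noncomputable def ee (q g : ℕ) : ℕ := @Fintype.card _ (fintypeEdge q g)

lemma card_GVert_zero (q : ℕ) (i : Fintype (GVert q 0)) :
    @Fintype.card (GVert q 0) i = q + 2 :=
  (card_inst_irrel i (Fin.fintype (q + 2))).trans (Fintype.card_fin _)

lemma nn_zero (q : ℕ) : nn q 0 = q + 2 := card_GVert_zero q _

lemma nn_succ (q g : ℕ) : nn q (g + 1) = nn q g + ee q g * q := by
  letI i1 := instFintypeGVert q g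
  letI i2 := fintypeEdge q g
  calc nn q (g + 1)
      = Fintype.card (GVert q g ⊕ ((Gnet q g).edgeSet × Fin q)) := card_inst_irrel _ _
    _ = nn q g + ee q g * q := by
        rw [Fintype.card_sum, Fintype.card_prod, Fintype.card_fin]; rfl

lemma hiso_Gnet (q : ℕ) (g : ℕ) : ∀ v : GVert q g, ∃ w, (Gnet q g).Adj v w := by
  induction g with
  | zero =>
    intro v
    obtain ⟨w, hw⟩ := exists_ne (α := Fin (q + 2)) v
    exact ⟨w, hw.symm⟩
  | succ g ih =>
    rintro (u | p)
    · obtain ⟨w, hw⟩ := ih u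
      exact ⟨Sum.inl w, hw⟩
    · exact ⟨Sum.inl (p.1 : Sym2 (GVert q g)).out.1, Sym2.out_fst_mem _⟩

lemma two_ee_zero (q : ℕ) : 2 * ee q 0 = (q + 2) * (q + 1) := by
  classical
  have hs := SimpleGraph.sum_degrees_eq_twice_card_edges (⊤ : SimpleGraph (GVert q 0))
  have hdeg : ∀ v : GVert q 0, (⊤ : SimpleGraph (GVert q 0)).degree v = q + 1 := by
    intro v
    have h1 : (⊤ : SimpleGraph (GVert q 0)).degree v = Fintype.card (GVert q 0) - 1 :=
      SimpleGraph.complete_graph_degree v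
    rw [h1, card_GVert_zero q]
    omega
  rw [Finset.sum_congr rfl (fun v _ => hdeg v), Finset.sum_const, card_univ, smul_eq_mul,
    card_GVert_zero q] at hs
  have hb : #(⊤ : SimpleGraph (GVert q 0)).edgeFinset = ee q 0 := by
    rw [SimpleGraph.edgeFinset, Set.toFinset_card]
    exact card_inst_irrel _ _
  rw [hb] at hs
  omega

lemma two_ee_succ (q g : ℕ) : 2 * ee q (g + 1) = (q + 1) * (q + 2) * ee q g := by
  classical
  letI i1 := instFintypeGVert q g
  letI i2 := fintypeEdge q g
  letI : DecidableRel (Gnet q g).Adj := Classical.decRel _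
  exact @card_edgeSet_edgeCorona _ i1 (Gnet q g) i2 q (fintypeEdge q (g + 1)) _

/-- `D` is a dominating set: every vertex not in `D` has a neighbor in `D`. -/
def IsDominatingSet {V : Type} (G : SimpleGraph V) (D : Finset V) : Prop :=
  ∀ v ∉ D, ∃ u ∈ D, G.Adj u v

/-- The domination number: the least cardinality of a dominating set. -/
noncomputable def domNum {V : Type} (G : SimpleGraph V) : ℕ :=
  sInf {n | ∃ D : Finset V, IsDominatingSet G D ∧ D.card = n}

lemma domNum_le {G : SimpleGraph V} {D : Finset V} (h : IsDominatingSet G D) :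
    domNum G ≤ D.card :=
  Nat.sInf_le ⟨D, h, rfl⟩

lemma domNum_edgeCorona (G : SimpleGraph V) (q : ℕ) (hq : 1 ≤ q)
    (hiso : ∀ v : V, ∃ w, G.Adj v w) :
    domNum (edgeCorona G q) = tau G := by
  classical
  haveI : Fintype G.edgeSet := SimpleGraph.fintypeEdgeSet G
  apply le_antisymm
  · refine le_csInf ⟨_, univ, isVC_univ G, rfl⟩ ?_
    rintro n ⟨S, hS, rfl⟩
    have hdom : IsDominatingSet (edgeCorona G q) (S.image Sum.inl) := by
      rintro (u | ⟨e, i⟩) hv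
      · have hu : u ∉ S := fun h => hv (mem_image_of_mem _ h)
        obtain ⟨w, hw⟩ := hiso u
        have hwS : w ∈ S := (hS hw).resolve_left hu
        exact ⟨Sum.inl w, mem_image_of_mem _ hwS, G.adj_symm hw⟩
      · obtain ⟨e, he⟩ := e
        induction e with
        | _ a b =>
          have hab : G.Adj a b := he
          rcases hS hab with h | h
          · exact ⟨Sum.inl a, mem_image_of_mem _ h, by simp [edgeCorona]⟩
          · exact ⟨Sum.inl b, mem_image_of_mem _ h, by simp [edgeCorona]⟩
    calc domNum (edgeCorona G q) ≤ (S.image Sum.inl).card := domNum_le hdom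
      _ ≤ S.card := card_image_le
  · refine le_csInf ⟨_, univ, fun v hv => absurd (mem_univ v) hv, rfl⟩ ?_
    rintro n ⟨D, hD, rfl⟩
    set f : V ⊕ (G.edgeSet × Fin q) → V := fun x =>
      match x with
      | Sum.inl u => u
      | Sum.inr p => (p.1 : Sym2 V).out.1 with hf
    have hcov : IsVC G (D.image f) := by
      intro u v hadj
      set e : G.edgeSet := ⟨s(u, v), hadj⟩ with he
      have hmem : ∀ x ∈ D, f x ∈ D.image f := fun x hx => mem_image_of_mem f hx
      have key : ∃ x ∈ D, f x ∈ (s(u, v) : Sym2 V) := by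
        by_cases hw : Sum.inr (e, (⟨0, hq⟩ : Fin q)) ∈ D
        · exact ⟨_, hw, Sym2.out_fst_mem _⟩
        · obtain ⟨x, hx, hadjx⟩ := hD _ hw
          match x with
          | Sum.inl a => exact ⟨_, hx, hadjx⟩
          | Sum.inr r =>
            refine ⟨_, hx, ?_⟩
            have : r.1 = e := hadjx.1
            rw [hf]; simp only; rw [this]
            exact Sym2.out_fst_mem _
      obtain ⟨x, hx, hmem2⟩ := key
      rcases Sym2.mem_iff.mp hmem2 with h | h
      · exact Or.inl (h ▸ hmem x hx)
      · exact Or.inr (h ▸ hmem x hx)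
    calc tau G ≤ (D.image f).card := tau_le hcov
      _ ≤ D.card := card_image_le

lemma domNum_Gnet_succ (q g : ℕ) (hq : 1 ≤ q) :
    domNum (Gnet q (g + 1)) = tau (Gnet q g) := by
  letI := instFintypeGVert q g
  exact domNum_edgeCorona (Gnet q g) q hq (hiso_Gnet q g)

lemma tau_Gnet_zero (q : ℕ) : tau (Gnet q 0) = q + 1 := tau_top q

lemma tau_Gnet_succ (q g : ℕ) (hq : 1 ≤ q) :
    tau (Gnet q (g + 1)) = (q - 1) * ee q g + nn q g :=
  @tau_edgeCorona _ (instFintypeGVert q g) (Gnet q g) (fintypeEdge q g) q hq (hiso_Gnet q g)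

lemma ee_q (q g : ℕ) :
    (ee q g : ℚ) = (((q : ℚ) + 1) * ((q : ℚ) + 2) / 2) ^ (g + 1) := by
  induction g with
  | zero =>
    have h : ((2 * ee q 0 : ℕ) : ℚ) = (((q + 2) * (q + 1) : ℕ) : ℚ) := by
      exact congrArg (Nat.cast : ℕ → ℚ) (two_ee_zero q)
    push_cast at h
    rw [pow_one]
    linarith
  | succ g ih =>
    have h : ((2 * ee q (g + 1) : ℕ) : ℚ) = (((q + 1) * (q + 2) * ee q g : ℕ) : ℚ) := by
      exact congrArg (Nat.cast : ℕ → ℚ) (two_ee_succ q g)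
    push_cast at h
    calc (ee q (g + 1) : ℚ) = (2 * (ee q (g + 1) : ℚ)) / 2 := by ring
      _ = (((q : ℚ) + 1) * ((q : ℚ) + 2) * (ee q g : ℚ)) / 2 := by rw [h]
      _ = (((q : ℚ) + 1) * ((q : ℚ) + 2) / 2) ^ (g + 1 + 1) := by rw [ih, pow_succ]; ring

lemma nn_q (q g : ℕ) :
    (nn q g : ℚ) = ((q : ℚ) + 2) + 2 * (((q : ℚ) + 1) * ((q : ℚ) + 2) / 2) *
      ((((q : ℚ) + 1) * ((q : ℚ) + 2) / 2) ^ g - 1) / ((q : ℚ) + 3) := by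
  have hq3 : ((q : ℚ) + 3) ≠ 0 := by positivity
  induction g with
  | zero =>
    rw [nn_zero]
    push_cast
    simp
  | succ g ih =>
    have h : ((nn q (g + 1) : ℕ) : ℚ) = ((nn q g + ee q g * q : ℕ) : ℚ) := by
      exact congrArg (Nat.cast : ℕ → ℚ) (nn_succ q g)
    push_cast at h
    rw [h, ih, ee_q]
    field_simp
    ring

/-- For `g ≥ 1`, the domination number of `G_q(g)` equals
`((q²+2q−1)/(q+3)) · ((q+1)(q+2)/2)^{g−1} + 2(q+2)/(q+3)`. -/
theorem domNum_Gnet (q g : ℕ) (hq : 1 ≤ q) (hg : 1 ≤ g) :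
    (domNum (Gnet q g) : ℚ) =
      (((q : ℚ) ^ 2 + 2 * q - 1) / ((q : ℚ) + 3)) *
          (((q : ℚ) + 1) * ((q : ℚ) + 2) / 2) ^ (g - 1)
        + 2 * ((q : ℚ) + 2) / ((q : ℚ) + 3) := by
  have hq3 : ((q : ℚ) + 3) ≠ 0 := by positivity
  obtain ⟨k, rfl⟩ : ∃ k, g = k + 1 := ⟨g - 1, by omega⟩
  rw [domNum_Gnet_succ q k hq]
  simp only [Nat.add_sub_cancel]
  cases k with
  | zero =>
    rw [tau_Gnet_zero q]
    push_cast
    rw [pow_zero]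
    field_simp
    ring
  | succ j =>
    rw [tau_Gnet_succ q j hq]
    have hcast : (((q - 1) * ee q j + nn q j : ℕ) : ℚ) =
        ((q : ℚ) - 1) * (ee q j : ℚ) + (nn q j : ℚ) := by
      push_cast [Nat.cast_sub hq]
      ring
    rw [hcast, ee_q, nn_q]
    field_simp
    ring
end

section
/- For all g ≥ 0 and q ≥ 1, the number of acyclic orientations of G_q(g) equals 2 · ((q+2)!/2)^{E(g,q)}, where E(g,q) = (2/(q(q+3))) · ((q+1)(q+2)/2)^{g+1} − 2/(q(q+3)). -/
/-- The exponent `E(g,q) = (2/(q(q+3))) · ((q+1)(q+2)/2)^{g+1} − 2/(q(q+3))`,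
a natural number (the division is exact). -/
def expE (q g : ℕ) : ℕ :=
  (2 * (((q + 1) * (q + 2) / 2) ^ (g + 1) - 1)) / (q * (q + 3))

/-- An acyclic orientation of a graph `G`: a choice of direction for every edge
such that the resulting directed graph has no directed cycle. -/
structure AcyclicOrientation {V : Type} (G : SimpleGraph V) where
  /-- the chosen direction relation -/
  dir : V → V → Prop
  dir_adj : ∀ u v, dir u v → G.Adj u v
  adj_dir : ∀ u v, G.Adj u v → dir u v ∨ dir v u
  asymm : ∀ u v, dir u v → ¬ dir v u
  acyclic : Irreflexive (Relation.TransGen dir)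

set_option linter.unusedSectionVars false
set_option linter.unusedVariables false



namespace AO

variable {V : Type} {G : SimpleGraph V}

theorem ext' {D₁ D₂ : AcyclicOrientation G} (h : D₁.dir = D₂.dir) : D₁ = D₂ := by
  cases D₁; cases D₂; cases h; rfl

theorem ext_iff {D₁ D₂ : AcyclicOrientation G} (h : ∀ u v, D₁.dir u v ↔ D₂.dir u v) : D₁ = D₂ :=
  ext' (funext fun u => funext fun v => propext (h u v))

instance [Finite V] : Finite (AcyclicOrientation G) :=
  Finite.of_injective (fun D => D.dir) (fun _ _ h => ext' h)

/-- reversal -/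
def rev (D : AcyclicOrientation G) : AcyclicOrientation G where
  dir u v := D.dir v u
  dir_adj u v h := (D.dir_adj v u h).symm
  adj_dir u v h := (D.adj_dir u v h).symm
  asymm u v h := D.asymm v u h
  acyclic x hx := D.acyclic x (Relation.TransGen.swap (r := fun u v => D.dir v u) x x hx)

@[simp] theorem rev_dir (D : AcyclicOrientation G) (u v : V) : (rev D).dir u v ↔ D.dir v u := Iff.rfl

theorem rev_rev (D : AcyclicOrientation G) : rev (rev D) = D := ext' rfl

theorem acyclic_of_height {α : Type*} [Preorder α] {d : V → V → Prop} (f : V → α)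
    (hf : ∀ u v, d u v → f u < f v) : Irreflexive (Relation.TransGen d) := by
  have key : ∀ u v, Relation.TransGen d u v → f u < f v := by
    intro u v h
    induction h with
    | single h => exact hf _ _ h
    | tail _ h ih => exact ih.trans (hf _ _ h)
  exact fun x hx => lt_irrefl _ (key x x hx)

open Finset in
theorem exists_height [Fintype V] (d : V → V → Prop)
    (h : Irreflexive (Relation.TransGen d)) :
    ∃ f : V → ℕ, (∀ u v, d u v → f u < f v) ∧ ∀ v, f v + 1 ≤ Fintype.card V := by
  classical
  refine ⟨fun v => (univ.filter (fun x => Relation.TransGen d x v)).card, ?_, ?_⟩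
  · intro u v huv
    apply Finset.card_lt_card
    constructor
    · intro x hx
      simp only [mem_filter, mem_univ, true_and] at hx ⊢
      exact hx.tail huv
    · intro hsub
      have : u ∈ univ.filter (fun x => Relation.TransGen d x v) := by
        simp [Relation.TransGen.single huv]
      have := hsub this
      simp only [mem_filter, mem_univ, true_and] at this
      exact h u this
  · intro v
    show (Finset.univ.filter (fun x => Relation.TransGen d x v)).card + 1 ≤ Fintype.card V
    have hsub : univ.filter (fun x => Relation.TransGen d x v) ⊆ univ.erase v := by
      intro x hx
      simp only [mem_filter, mem_univ, true_and] at hx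
      refine Finset.mem_erase.mpr ⟨?_, Finset.mem_univ _⟩
      rintro rfl; exact h x hx
    have := Finset.card_le_card hsub
    rw [Finset.card_erase_of_mem (Finset.mem_univ v), Finset.card_univ] at this
    have hpos : 0 < Fintype.card V := Fintype.card_pos_iff.mpr ⟨v⟩
    omega

set_option linter.unusedSectionVars false
section Top

theorem top_total (C : AcyclicOrientation (⊤ : SimpleGraph V)) {u v : V} (h : u ≠ v) :
    C.dir u v ∨ C.dir v u := C.adj_dir u v ((SimpleGraph.top_adj u v).mpr h)

theorem dir_ne (C : AcyclicOrientation G) {u v : V} (h : C.dir u v) : u ≠ v :=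
  (C.dir_adj u v h).ne

theorem not_dir_iff (C : AcyclicOrientation (⊤ : SimpleGraph V)) {u v : V} (h : u ≠ v) :
    ¬ C.dir u v ↔ C.dir v u := by
  constructor
  · intro hn
    rcases top_total C h with h' | h'
    · exact absurd h' hn
    · exact h'
  · exact fun h' => fun hc => C.asymm u v hc h'

theorem top_reflect (C : AcyclicOrientation (⊤ : SimpleGraph V)) {α : Type*} [LinearOrder α]
    {f : V → α} (hf : ∀ u v, C.dir u v → f u < f v) {u v : V} (h : f u < f v) : C.dir u v := by
  have hne : u ≠ v := fun e => by subst e; exact lt_irrefl _ h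
  rcases top_total C hne with h' | h'
  · exact h'
  · exact absurd (hf _ _ h') (not_lt_of_gt h)

theorem top_iff (C : AcyclicOrientation (⊤ : SimpleGraph V)) {α : Type*} [LinearOrder α]
    {f : V → α} (hf : ∀ u v, C.dir u v → f u < f v) (u v : V) : C.dir u v ↔ f u < f v :=
  ⟨hf u v, top_reflect C hf⟩

end Top

section Count
variable {V : Type} [Fintype V]

open Finset

theorem top_trans (C : AcyclicOrientation (⊤ : SimpleGraph V)) {u v w : V}
    (h1 : C.dir u v) (h2 : C.dir v w) : C.dir u w := by
  have hne : u ≠ w := by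
    rintro rfl
    exact C.acyclic u ((Relation.TransGen.single h1).tail h2)
  rcases top_total C hne with h | h
  · exact h
  · exact absurd (((Relation.TransGen.single h1).tail h2).tail h) (fun hc => C.acyclic u hc)

open scoped Classical in
/-- rank of a vertex in an acyclic orientation of a complete graph -/
noncomputable def rk (C : AcyclicOrientation (⊤ : SimpleGraph V)) (v : V) : ℕ :=
  (univ.filter (fun x => C.dir x v)).card

theorem rk_strict (C : AcyclicOrientation (⊤ : SimpleGraph V)) :
    ∀ u v, C.dir u v → rk C u < rk C v := by
  classical
  intro u v h
  have h1 : (univ.filter (fun x => C.dir x u)).card < (univ.filter (fun x => C.dir x v)).card := by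
    apply Finset.card_lt_card
    constructor
    · intro x hx
      simp only [mem_filter, mem_univ, true_and] at hx ⊢
      exact top_trans C hx h
    · intro hsub
      have hu : u ∈ univ.filter (fun x => C.dir x v) := by simp [h]
      have := hsub hu
      simp only [mem_filter, mem_univ, true_and] at this
      exact (C.dir_adj u u this).ne rfl
  simpa [rk] using h1

theorem rk_lt (C : AcyclicOrientation (⊤ : SimpleGraph V)) (v : V) :
    rk C v < Fintype.card V := by
  classical
  have hsub : univ.filter (fun x => C.dir x v) ⊆ univ.erase v := by
    intro x hx
    simp only [mem_filter, mem_univ, true_and] at hx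
    exact Finset.mem_erase.mpr ⟨(C.dir_adj x v hx).ne, Finset.mem_univ _⟩
  have h2 := Finset.card_le_card hsub
  rw [Finset.card_erase_of_mem (Finset.mem_univ v), Finset.card_univ] at h2
  have hpos : 0 < Fintype.card V := Fintype.card_pos_iff.mpr ⟨v⟩
  have : rk C v ≤ Fintype.card V - 1 := by simpa [rk] using h2
  omega

/-- acyclic orientation from a ranking -/
def ofRank (σ : V ≃ Fin (Fintype.card V)) : AcyclicOrientation (⊤ : SimpleGraph V) where
  dir u v := (σ u : ℕ) < (σ v : ℕ)
  dir_adj u v h := (SimpleGraph.top_adj u v).mpr (fun e => by subst e; exact lt_irrefl _ h)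
  adj_dir u v h := by
    have hne : u ≠ v := (SimpleGraph.top_adj u v).mp h
    have : (σ u : ℕ) ≠ (σ v : ℕ) := fun e => hne (σ.injective (Fin.ext e))
    omega
  asymm u v h := by omega
  acyclic := acyclic_of_height (fun v => (σ v : ℕ)) (fun u v h => h)

noncomputable def toPerm (C : AcyclicOrientation (⊤ : SimpleGraph V)) :
    V ≃ Fin (Fintype.card V) :=
  Equiv.ofBijective (fun v => (⟨rk C v, rk_lt C v⟩ : Fin (Fintype.card V)))
    (by
      rw [Fintype.bijective_iff_injective_and_card]
      refine ⟨?_, by simp⟩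
      intro u v h
      by_contra hne
      rcases top_total C hne with h' | h' <;>
        [exact absurd (Fin.mk.injEq .. ▸ h) (Nat.ne_of_lt (rk_strict C _ _ h'));
         exact absurd (Fin.mk.injEq .. ▸ h) (Nat.ne_of_gt (rk_strict C _ _ h'))])

theorem toPerm_bijective :
    Function.Bijective (toPerm (V := V)) := by
  classical
  constructor
  · intro C C' h
    have hr : ∀ v, rk C v = rk C' v := by
      intro v
      have := congrFun (congrArg (fun (σ : V ≃ Fin (Fintype.card V)) => (σ : V → Fin _)) h) v
      simpa [toPerm, Equiv.ofBijective] using this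
    apply ext_iff
    intro u v
    rw [top_iff C (rk_strict C), top_iff C' (rk_strict C'), hr u, hr v]
  · intro σ
    refine ⟨ofRank σ, ?_⟩
    apply Equiv.ext
    intro v
    apply Fin.ext
    show rk (ofRank σ) v = (σ v : ℕ)
    classical
    rw [rk]
    rw [← Fin.card_Iio (σ v)]
    apply Finset.card_bij' (fun x _ => σ x) (fun y _ => σ.symm y)
    · intro x hx
      simp only [mem_filter, mem_univ, true_and] at hx
      exact Finset.mem_Iio.mpr (show σ x < σ v from hx)
    · intro y hy
      simp only [Finset.mem_Iio, Fin.lt_iff_val_lt_val] at hy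
      simp only [mem_filter, mem_univ, true_and]
      show (σ (σ.symm y) : ℕ) < (σ v : ℕ)
      simpa using hy
    · intro x _; simp
    · intro y _; simp

theorem card_ao_top : Nat.card (AcyclicOrientation (⊤ : SimpleGraph V)) =
    (Fintype.card V).factorial := by
  classical
  rw [Nat.card_congr (Equiv.ofBijective _ (toPerm_bijective (V := V))),
    Nat.card_eq_fintype_card, Fintype.card_equiv (Fintype.equivFin V)]

theorem card_ao_top_fixed {x y : V} (hxy : x ≠ y) (P : Prop) :
    Nat.card {C : AcyclicOrientation (⊤ : SimpleGraph V) // C.dir x y ↔ P} =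
      (Fintype.card V).factorial / 2 := by
  classical
  set c₁ := Nat.card {C : AcyclicOrientation (⊤ : SimpleGraph V) // C.dir x y} with hc₁
  have hrev : Nat.card {C : AcyclicOrientation (⊤ : SimpleGraph V) // C.dir y x} = c₁ := by
    apply Nat.card_congr
    exact ⟨fun C => ⟨rev C.1, C.2⟩, fun C => ⟨rev C.1, C.2⟩,
      fun C => Subtype.ext (rev_rev C.1), fun C => Subtype.ext (rev_rev C.1)⟩
  have hcompl : Nat.card {C : AcyclicOrientation (⊤ : SimpleGraph V) // C.dir y x} =
      Nat.card {C : AcyclicOrientation (⊤ : SimpleGraph V) // ¬ C.dir x y} := by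
    apply Nat.card_congr
    apply Equiv.subtypeEquivRight
    intro C
    exact ((not_dir_iff C hxy)).symm
  have hsplit : c₁ + Nat.card {C : AcyclicOrientation (⊤ : SimpleGraph V) // ¬ C.dir x y} =
      (Fintype.card V).factorial := by
    rw [← card_ao_top (V := V)]
    have h := Nat.card_congr (Equiv.sumCompl (fun C : AcyclicOrientation (⊤ : SimpleGraph V) => C.dir x y))
    rw [Nat.card_sum] at h
    exact h
  have h2 : 2 * c₁ = (Fintype.card V).factorial := by
    rw [← hsplit, ← hcompl, hrev]; ring
  by_cases hP : P
  · have : Nat.card {C : AcyclicOrientation (⊤ : SimpleGraph V) // C.dir x y ↔ P} = c₁ := by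
      apply Nat.card_congr
      apply Equiv.subtypeEquivRight
      intro C
      simp [hP]
    omega
  · have : Nat.card {C : AcyclicOrientation (⊤ : SimpleGraph V) // C.dir x y ↔ P} =
        Nat.card {C : AcyclicOrientation (⊤ : SimpleGraph V) // ¬ C.dir x y} := by
      apply Nat.card_congr
      apply Equiv.subtypeEquivRight
      intro C
      simp [hP]
    omega

end Count

end AO

section Corona

variable {V : Type} {G : SimpleGraph V} {q : ℕ}

/-- the endpoints of an edge, in some fixed order -/
noncomputable def ept (e : G.edgeSet) (t : Bool) : V :=
  if t then (Quot.out (e : Sym2 V)).2 else (Quot.out (e : Sym2 V)).1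

theorem ept_pair (e : G.edgeSet) : s(ept e false, ept e true) = (e : Sym2 V) := by
  simp only [ept, if_true, if_false]
  exact Quot.out_eq _

theorem ept_adj (e : G.edgeSet) : G.Adj (ept e false) (ept e true) := by
  rw [← SimpleGraph.mem_edgeSet, ept_pair]
  exact e.2

theorem ept_ne (e : G.edgeSet) : ept e false ≠ ept e true := (ept_adj e).ne

theorem mem_iff_ept {e : G.edgeSet} {u : V} :
    u ∈ (e : Sym2 V) ↔ u = ept e false ∨ u = ept e true := by
  rw [← ept_pair e, Sym2.mem_iff]

/-- the canonical embedding of the `e`-th copy of `K_{q+2}` into the edge corona -/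
noncomputable def cpy (e : G.edgeSet) : Bool ⊕ Fin q → V ⊕ (G.edgeSet × Fin q)
  | Sum.inl t => Sum.inl (ept e t)
  | Sum.inr i => Sum.inr (e, i)

theorem cpy_injective (e : G.edgeSet) : Function.Injective (cpy (q := q) e) := by
  rintro (t | i) (t' | i') h
  · simp only [cpy, Sum.inl.injEq] at h
    congr 1
    cases t <;> cases t'
    · rfl
    · exact absurd h (ept_ne e)
    · exact absurd h.symm (ept_ne e)
    · rfl
  · exact absurd h (by simp [cpy])
  · exact absurd h (by simp [cpy])
  · simp only [cpy, Sum.inr.injEq, Prod.mk.injEq] at h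
    rw [h.2]

theorem cpy_adj (e : G.edgeSet) (x y : Bool ⊕ Fin q) :
    (edgeCorona G q).Adj (cpy e x) (cpy e y) ↔ x ≠ y := by
  rcases x with t | i <;> rcases y with t' | j
  · show G.Adj (ept e t) (ept e t') ↔ _
    constructor
    · intro h hxy
      rw [Sum.inl.injEq] at hxy
      exact h.ne (by rw [hxy])
    · intro h
      have : t ≠ t' := fun e' => h (by rw [e'])
      cases t <;> cases t' <;> first | exact absurd rfl this | exact ept_adj e | exact (ept_adj e).symm
  · show ept e t ∈ (e : Sym2 V) ↔ _
    simp only [ne_eq, reduceCtorEq, not_false_iff, iff_true]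
    rw [mem_iff_ept]
    cases t
    · exact Or.inl rfl
    · exact Or.inr rfl
  · show ept e t' ∈ (e : Sym2 V) ↔ _
    simp only [ne_eq, reduceCtorEq, not_false_iff, iff_true]
    rw [mem_iff_ept]
    cases t'
    · exact Or.inl rfl
    · exact Or.inr rfl
  · show (e = e ∧ i ≠ j) ↔ _
    simp

end Corona

namespace AO

section CopyHeight
variable {q : ℕ}

private theorem copy_height_aux (C : AcyclicOrientation (⊤ : SimpleGraph (Bool ⊕ Fin q)))
    (c : Bool) (fu fv : ℤ) (hd : C.dir (Sum.inl c) (Sum.inl (!c))) (hlt : fu < fv) :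
    ∃ HH : Bool ⊕ Fin q → ℤ, HH (Sum.inl c) = (q+2) * fu ∧ HH (Sum.inl (!c)) = (q+2) * fv ∧
      ∀ p p', C.dir p p' → HH p < HH p' := by
  classical
  obtain ⟨r, hr, hbd⟩ := exists_height C.dir C.acyclic
  have hcard : Fintype.card (Bool ⊕ Fin q) = q + 2 := by simp; omega
  set z : Bool ⊕ Fin q → ℤ := fun x => (r x : ℤ) with hz
  have hzs : ∀ p p', C.dir p p' → z p < z p' := by
    intro p p' h
    have := hr p p' h
    show (r p : ℤ) < (r p' : ℤ)
    exact_mod_cast this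
  have hzb : ∀ p, 0 ≤ z p ∧ z p ≤ (q:ℤ) + 1 := by
    intro p
    have h1 := hbd p
    rw [hcard] at h1
    have h2 : r p ≤ q + 1 := by omega
    refine ⟨Int.natCast_nonneg _, ?_⟩
    show (r p : ℤ) ≤ (q:ℤ) + 1
    exact_mod_cast h2
  set m := z (Sum.inl c) with hm
  set M := z (Sum.inl (!c)) with hM
  have hmM : m < M := hzs _ _ hd
  have hm0 : 0 ≤ m := (hzb (Sum.inl c)).1
  have hM1 : M ≤ (q:ℤ) + 1 := (hzb (Sum.inl (!c))).2
  have hstep : ((q:ℤ)+2) * fu + ((q:ℤ)+2) ≤ ((q:ℤ)+2) * fv := by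
    have h1 : fu + 1 ≤ fv := hlt
    have h2 : (0:ℤ) ≤ (q:ℤ) + 2 := by positivity
    nlinarith
  refine ⟨Sum.elim (fun t => if t = c then ((q:ℤ)+2) * fu else ((q:ℤ)+2) * fv)
    (fun i => if z (Sum.inr i) < m then ((q:ℤ)+2) * fu - ((q:ℤ)+2) + z (Sum.inr i)
        else if M < z (Sum.inr i) then ((q:ℤ)+2) * fv + (z (Sum.inr i) - M)
        else ((q:ℤ)+2) * fu + (z (Sum.inr i) - m)), ?_, ?_, ?_⟩
  · simp
  · simp
  · intro p p' hdp
    have hzlt := hzs _ _ hdp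
    have hnep : p ≠ p' := dir_ne C hdp
    rcases p with t | i <;> rcases p' with t' | j <;>
      simp only [Sum.elim_inl, Sum.elim_inr]
    · -- inl/inl
      by_cases ht : t = c <;> by_cases ht' : t' = c
      · exact absurd (ht.trans ht'.symm) (fun e => hnep (by rw [e]))
      · simp only [if_pos ht, if_neg ht']
        linarith [hstep]
      · have htt : t = !c := by revert ht; cases t <;> cases c <;> simp
        rw [htt, ht'] at hdp
        exact absurd hd (C.asymm _ _ hdp)
      · have htt : t = !c := by revert ht; cases t <;> cases c <;> simp
        have htt' : t' = !c := by revert ht'; cases t' <;> cases c <;> simp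
        exact absurd (htt.trans htt'.symm) (fun e => hnep (by rw [e]))
    · -- inl t / inr j
      by_cases ht : t = c
      · subst ht
        simp only [if_pos rfl]
        have hmz : m < z (Sum.inr j) := hzlt
        split_ifs with h1 h2 <;> linarith [hzb (Sum.inr j), hstep]
      · have htt : t = !c := by revert ht; cases t <;> cases c <;> simp
        subst htt
        simp only [if_neg ht]
        have hMz : M < z (Sum.inr j) := hzlt
        split_ifs with h1 h2 <;> linarith [hzb (Sum.inr j), hstep]
    · -- inr i / inl t'
      by_cases ht : t' = c
      · subst ht
        simp only [if_pos rfl]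
        have hzm : z (Sum.inr i) < m := hzlt
        split_ifs with h1 h2 <;> linarith [hzb (Sum.inr i), hstep]
      · have htt : t' = !c := by revert ht; cases t' <;> cases c <;> simp
        subst htt
        simp only [if_neg ht]
        have hzM : z (Sum.inr i) < M := hzlt
        split_ifs with h1 h2 <;> linarith [hzb (Sum.inr i), hstep]
    · -- inr / inr
      split_ifs with h1 h2 h3 h4 h5 h6 h7 h8 <;>
        linarith [hzb (Sum.inr i), hzb (Sum.inr j), hstep]

theorem copy_height (C : AcyclicOrientation (⊤ : SimpleGraph (Bool ⊕ Fin q)))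
    (fa fb : ℤ) (hab : C.dir (Sum.inl false) (Sum.inl true) ↔ fa < fb) (hne : fa ≠ fb) :
    ∃ HH : Bool ⊕ Fin q → ℤ, HH (Sum.inl false) = (q+2) * fa ∧ HH (Sum.inl true) = (q+2) * fb ∧
      ∀ p p', C.dir p p' → HH p < HH p' := by
  by_cases hfa : fa < fb
  · have hd : C.dir (Sum.inl false) (Sum.inl true) := hab.mpr hfa
    have := copy_height_aux C false fa fb (by simpa using hd) hfa
    simpa using this
  · have hfb : fb < fa := lt_of_le_of_ne (not_lt.mp hfa) (Ne.symm hne)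
    have hnd : ¬ C.dir (Sum.inl false) (Sum.inl true) := fun h => hfa (hab.mp h)
    have hd : C.dir (Sum.inl true) (Sum.inl false) :=
      (not_dir_iff C (by simp)).mp hnd
    have := copy_height_aux C true fb fa (by simpa using hd) hfb
    obtain ⟨HH, h1, h2, h3⟩ := this
    exact ⟨HH, by simpa using h2, h1, h3⟩

end CopyHeight
end AO

namespace AO
section Glue
variable {V : Type} {G : SimpleGraph V} {q : ℕ}

theorem adj_not_dir_iff (D : AcyclicOrientation G) {u v : V} (h : G.Adj u v) :
    ¬ D.dir u v ↔ D.dir v u := by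
  constructor
  · intro hn
    rcases D.adj_dir u v h with h' | h'
    · exact absurd h' hn
    · exact h'
  · exact fun h' hc => D.asymm u v hc h'

def restrictBase (D : AcyclicOrientation (edgeCorona G q)) : AcyclicOrientation G where
  dir u v := D.dir (Sum.inl u) (Sum.inl v)
  dir_adj u v h := D.dir_adj _ _ h
  adj_dir u v h := D.adj_dir (Sum.inl u) (Sum.inl v) h
  asymm u v h := D.asymm _ _ h
  acyclic u hu := D.acyclic (Sum.inl u)
    (Relation.TransGen.lift Sum.inl (fun _ _ h => h) u u hu)

noncomputable def restrictCopy (D : AcyclicOrientation (edgeCorona G q)) (e : G.edgeSet) :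
    AcyclicOrientation (⊤ : SimpleGraph (Bool ⊕ Fin q)) where
  dir x y := D.dir (cpy e x) (cpy e y)
  dir_adj x y h := (SimpleGraph.top_adj x y).mpr
    (fun hxy => (D.dir_adj _ _ h).ne (by rw [hxy]))
  adj_dir x y h := D.adj_dir _ _ ((cpy_adj e x y).mpr ((SimpleGraph.top_adj x y).mp h))
  asymm x y h := D.asymm _ _ h
  acyclic x hx := D.acyclic (cpy e x)
    (Relation.TransGen.lift (cpy e) (fun _ _ h => h) x x hx)

/-- the direction relation obtained by gluing a base orientation with per-edge copies -/
def gdir (D : AcyclicOrientation G)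
    (F : ∀ _ : G.edgeSet, AcyclicOrientation (⊤ : SimpleGraph (Bool ⊕ Fin q))) :
    (V ⊕ (G.edgeSet × Fin q)) → (V ⊕ (G.edgeSet × Fin q)) → Prop
  | Sum.inl u, Sum.inl v => D.dir u v
  | Sum.inl u, Sum.inr p => ∃ t, ept p.1 t = u ∧ (F p.1).dir (Sum.inl t) (Sum.inr p.2)
  | Sum.inr p, Sum.inl v => ∃ t, ept p.1 t = v ∧ (F p.1).dir (Sum.inr p.2) (Sum.inl t)
  | Sum.inr p, Sum.inr r => p.1 = r.1 ∧ (F p.1).dir (Sum.inr p.2) (Sum.inr r.2)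

noncomputable def glue [Finite V] (D : AcyclicOrientation G)
    (F : ∀ _ : G.edgeSet, AcyclicOrientation (⊤ : SimpleGraph (Bool ⊕ Fin q)))
    (hF : ∀ e, (F e).dir (Sum.inl false) (Sum.inl true) ↔ D.dir (ept e false) (ept e true)) :
    AcyclicOrientation (edgeCorona G q) where
  dir := gdir D F
  dir_adj := by
    rintro (u | ⟨e, i⟩) (v | ⟨e', j⟩) h
    · exact D.dir_adj u v h
    · obtain ⟨t, rfl, _⟩ := h
      show ept e' t ∈ (e' : Sym2 V)
      rw [mem_iff_ept]
      cases t
      · exact Or.inl rfl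
      · exact Or.inr rfl
    · obtain ⟨t, rfl, _⟩ := h
      show ept e t ∈ (e : Sym2 V)
      rw [mem_iff_ept]
      cases t
      · exact Or.inl rfl
      · exact Or.inr rfl
    · obtain ⟨h1, h2⟩ := h
      exact ⟨h1, fun hij => ((F e).dir_adj _ _ h2).ne (by rw [hij])⟩
  adj_dir := by
    rintro (u | ⟨e, i⟩) (v | ⟨e', j⟩) h
    · exact D.adj_dir u v h
    · rcases mem_iff_ept.mp h with h' | h'
      · rcases (F e').adj_dir (Sum.inl false) (Sum.inr j)
            ((SimpleGraph.top_adj _ _).mpr (by simp)) with hd | hd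
        · exact Or.inl ⟨false, h'.symm, hd⟩
        · exact Or.inr ⟨false, h'.symm, hd⟩
      · rcases (F e').adj_dir (Sum.inl true) (Sum.inr j)
            ((SimpleGraph.top_adj _ _).mpr (by simp)) with hd | hd
        · exact Or.inl ⟨true, h'.symm, hd⟩
        · exact Or.inr ⟨true, h'.symm, hd⟩
    · rcases mem_iff_ept.mp h with h' | h'
      · rcases (F e).adj_dir (Sum.inl false) (Sum.inr i)
            ((SimpleGraph.top_adj _ _).mpr (by simp)) with hd | hd
        · exact Or.inr ⟨false, h'.symm, hd⟩
        · exact Or.inl ⟨false, h'.symm, hd⟩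
      · rcases (F e).adj_dir (Sum.inl true) (Sum.inr i)
            ((SimpleGraph.top_adj _ _).mpr (by simp)) with hd | hd
        · exact Or.inr ⟨true, h'.symm, hd⟩
        · exact Or.inl ⟨true, h'.symm, hd⟩
    · obtain ⟨h1, h2⟩ := h
      dsimp at h1
      subst h1
      rcases (F e).adj_dir (Sum.inr i) (Sum.inr j)
          ((SimpleGraph.top_adj _ _).mpr (by simpa using h2)) with hd | hd
      · exact Or.inl ⟨rfl, hd⟩
      · exact Or.inr ⟨rfl, hd⟩
  asymm := by
    rintro (u | ⟨e, i⟩) (v | ⟨e', j⟩) h h'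
    · exact D.asymm u v h h'
    · obtain ⟨t, ht, hd⟩ := h
      obtain ⟨t', ht', hd'⟩ := h'
      cases t <;> cases t' <;>
        first
          | exact (F e').asymm _ _ hd hd'
          | exact ept_ne e' (ht.trans ht'.symm)
          | exact ept_ne e' (ht'.trans ht.symm)
    · obtain ⟨t, ht, hd⟩ := h
      obtain ⟨t', ht', hd'⟩ := h'
      cases t <;> cases t' <;>
        first
          | exact (F e).asymm _ _ hd hd'
          | exact ept_ne e (ht.trans ht'.symm)
          | exact ept_ne e (ht'.trans ht.symm)
    · obtain ⟨h1, hd⟩ := h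
      obtain ⟨h1', hd'⟩ := h'
      dsimp at h1
      subst h1
      exact (F e).asymm _ _ hd hd'
  acyclic := by
    classical
    letI := Fintype.ofFinite V
    obtain ⟨f0n, hf0, _⟩ := exists_height D.dir D.acyclic
    set f0 : V → ℤ := fun v => (f0n v : ℤ) with hf0z
    have hf0s : ∀ u v, D.dir u v → f0 u < f0 v := by
      intro u v h
      have := hf0 u v h
      show (f0n u : ℤ) < (f0n v : ℤ)
      exact_mod_cast this
    have key : ∀ e : G.edgeSet,
        ∃ HH : Bool ⊕ Fin q → ℤ,
          HH (Sum.inl false) = (q+2) * f0 (ept e false) ∧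
          HH (Sum.inl true) = (q+2) * f0 (ept e true) ∧
          ∀ p p', (F e).dir p p' → HH p < HH p' := by
      intro e
      have hne : f0 (ept e false) ≠ f0 (ept e true) := by
        rcases D.adj_dir _ _ (ept_adj e) with hd | hd
        · exact ne_of_lt (hf0s _ _ hd)
        · exact ne_of_gt (hf0s _ _ hd)
      have hiff : (F e).dir (Sum.inl false) (Sum.inl true) ↔
          f0 (ept e false) < f0 (ept e true) := by
        rw [hF e]
        constructor
        · exact hf0s _ _
        · intro hlt
          rcases D.adj_dir _ _ (ept_adj e) with hd | hd
          · exact hd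
          · exact absurd (hf0s _ _ hd) (not_lt_of_gt hlt)
      exact copy_height (F e) _ _ hiff hne
    choose HH h1 h2 h3 using key
    apply acyclic_of_height
      (Sum.elim (fun v => ((q:ℤ)+2) * f0 v) (fun p => HH p.1 (Sum.inr p.2)))
    rintro (u | ⟨e, i⟩) (v | ⟨e', j⟩) h
    · simp only [Sum.elim_inl]
      have := hf0s u v h
      have hq : (0:ℤ) < (q:ℤ) + 2 := by positivity
      exact mul_lt_mul_of_pos_left this hq
    · obtain ⟨t, rfl, hd⟩ := h
      simp only [Sum.elim_inl, Sum.elim_inr]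
      have := h3 e' _ _ hd
      cases t
      · rwa [h1 e'] at this
      · rwa [h2 e'] at this
    · obtain ⟨t, rfl, hd⟩ := h
      simp only [Sum.elim_inl, Sum.elim_inr]
      have := h3 e _ _ hd
      cases t
      · rwa [h1 e] at this
      · rwa [h2 e] at this
    · obtain ⟨h1', hd⟩ := h
      dsimp at h1'
      subst h1'
      exact h3 e _ _ hd

end Glue
end AO

namespace AO
section Roundtrip
variable {V : Type} [Finite V] {G : SimpleGraph V} {q : ℕ}

theorem glue_restrictBase (D : AcyclicOrientation G)
    (F : ∀ _ : G.edgeSet, AcyclicOrientation (⊤ : SimpleGraph (Bool ⊕ Fin q))) (hF) :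
    restrictBase (glue D F hF) = D := ext' rfl

theorem glue_restrictCopy (D : AcyclicOrientation G)
    (F : ∀ _ : G.edgeSet, AcyclicOrientation (⊤ : SimpleGraph (Bool ⊕ Fin q))) (hF)
    (e : G.edgeSet) : restrictCopy (glue D F hF) e = F e := by
  apply ext_iff
  intro x y
  rcases x with t | i <;> rcases y with t' | j
  · show D.dir (ept e t) (ept e t') ↔ (F e).dir (Sum.inl t) (Sum.inl t')
    cases t <;> cases t'
    · constructor
      · intro h; exact absurd rfl (D.dir_adj _ _ h).ne
      · intro h; exact absurd rfl ((F e).dir_adj _ _ h).ne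
    · exact (hF e).symm
    · constructor
      · intro h
        have hnd : ¬ D.dir (ept e false) (ept e true) := fun h' => D.asymm _ _ h' h
        have hnf : ¬ (F e).dir (Sum.inl false) (Sum.inl true) := fun h' => hnd ((hF e).mp h')
        exact (not_dir_iff (F e) (by simp)).mp hnf
      · intro h
        have hnf : ¬ (F e).dir (Sum.inl false) (Sum.inl true) := fun h' => (F e).asymm _ _ h' h
        have hnd : ¬ D.dir (ept e false) (ept e true) := fun h' => hnf ((hF e).mpr h')
        exact (adj_not_dir_iff D (ept_adj e)).mp hnd
    · constructor
      · intro h; exact absurd rfl (D.dir_adj _ _ h).ne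
      · intro h; exact absurd rfl ((F e).dir_adj _ _ h).ne
  · show (∃ t', ept e t' = ept e t ∧ (F e).dir (Sum.inl t') (Sum.inr j)) ↔
      (F e).dir (Sum.inl t) (Sum.inr j)
    constructor
    · rintro ⟨t', ht', hd⟩
      have htt : t' = t := by
        cases t' <;> cases t <;>
          first
            | rfl
            | exact absurd ht' (ept_ne e)
            | exact absurd ht'.symm (ept_ne e)
      rwa [htt] at hd
    · intro hd; exact ⟨t, rfl, hd⟩
  · show (∃ s, ept e s = ept e t' ∧ (F e).dir (Sum.inr i) (Sum.inl s)) ↔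
      (F e).dir (Sum.inr i) (Sum.inl t')
    constructor
    · rintro ⟨s, hs, hd⟩
      have htt : s = t' := by
        cases s <;> cases t' <;>
          first
            | rfl
            | exact absurd hs (ept_ne e)
            | exact absurd hs.symm (ept_ne e)
      rwa [htt] at hd
    · intro hd; exact ⟨t', rfl, hd⟩
  · show (e = e ∧ (F e).dir (Sum.inr i) (Sum.inr j)) ↔ (F e).dir (Sum.inr i) (Sum.inr j)
    simp

theorem restrict_glue (D' : AcyclicOrientation (edgeCorona G q))
    (hF' : ∀ e : G.edgeSet, (restrictCopy D' e).dir (Sum.inl false) (Sum.inl true) ↔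
      (restrictBase D').dir (ept e false) (ept e true)) :
    glue (restrictBase D') (fun e => restrictCopy D' e) hF' = D' := by
  apply ext_iff
  rintro (u | ⟨e, i⟩) (v | ⟨e', j⟩)
  · exact Iff.rfl
  · show (∃ t, ept e' t = u ∧ D'.dir (Sum.inl (ept e' t)) (Sum.inr (e', j))) ↔
      D'.dir (Sum.inl u) (Sum.inr (e', j))
    constructor
    · rintro ⟨t, rfl, hd⟩; exact hd
    · intro hd
      have hm : u ∈ (e' : Sym2 V) := D'.dir_adj _ _ hd
      rcases mem_iff_ept.mp hm with h' | h' <;> subst h'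
      · exact ⟨false, rfl, hd⟩
      · exact ⟨true, rfl, hd⟩
  · show (∃ t, ept e t = v ∧ D'.dir (Sum.inr (e, i)) (Sum.inl (ept e t))) ↔
      D'.dir (Sum.inr (e, i)) (Sum.inl v)
    constructor
    · rintro ⟨t, rfl, hd⟩; exact hd
    · intro hd
      have hm : v ∈ (e : Sym2 V) := D'.dir_adj _ _ hd
      rcases mem_iff_ept.mp hm with h' | h' <;> subst h'
      · exact ⟨false, rfl, hd⟩
      · exact ⟨true, rfl, hd⟩
  · show (e = e' ∧ D'.dir (Sum.inr (e, i)) (Sum.inr (e, j))) ↔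
      D'.dir (Sum.inr (e, i)) (Sum.inr (e', j))
    constructor
    · rintro ⟨rfl, hd⟩; exact hd
    · intro hd
      obtain ⟨h1, -⟩ := D'.dir_adj _ _ hd
      dsimp at h1
      subst h1
      exact ⟨rfl, hd⟩

theorem glue_congr {D D' : AcyclicOrientation G}
    {F F' : ∀ _ : G.edgeSet, AcyclicOrientation (⊤ : SimpleGraph (Bool ⊕ Fin q))}
    (hD : D = D') (hFF : F = F') (hF) (hF') : glue D F hF = glue D' F' hF' := by
  subst hD; subst hFF; rfl

end Roundtrip
end AO

namespace AO

theorem nat_card_sigma {ι : Type} [Fintype ι] (f : ι → Type) [∀ i, Finite (f i)] :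
    Nat.card (Σ i, f i) = ∑ i, Nat.card (f i) := by
  letI : ∀ i, Fintype (f i) := fun i => Fintype.ofFinite _
  rw [Nat.card_eq_fintype_card, Fintype.card_sigma]
  exact Finset.sum_congr rfl (fun i _ => (Nat.card_eq_fintype_card).symm)

theorem card_step {V : Type} [Finite V] (G : SimpleGraph V) (q : ℕ) :
    Nat.card (AcyclicOrientation (edgeCorona G q)) =
      Nat.card (AcyclicOrientation G) * ((q+2).factorial / 2) ^ (Nat.card G.edgeSet) := by
  classical
  letI : Fintype G.edgeSet := Fintype.ofFinite _
  letI : Fintype (AcyclicOrientation G) := Fintype.ofFinite _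
  set Q : AcyclicOrientation G → (e : G.edgeSet) →
      AcyclicOrientation (⊤ : SimpleGraph (Bool ⊕ Fin q)) → Prop :=
    fun D e C => (C.dir (Sum.inl false) (Sum.inl true) ↔ D.dir (ept e false) (ept e true))
    with hQ
  set Φ : AcyclicOrientation (edgeCorona G q) →
      (AcyclicOrientation G) × (∀ _ : G.edgeSet, AcyclicOrientation (⊤ : SimpleGraph (Bool ⊕ Fin q))) :=
    fun D => (restrictBase D, fun e => restrictCopy D e) with hΦ
  have hinj : Function.Injective Φ := by
    intro D₁ D₂ h
    have h1 : restrictBase D₁ = restrictBase D₂ := congrArg Prod.fst h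
    have h2 : (fun e => restrictCopy D₁ e) = fun e => restrictCopy D₂ e := congrArg Prod.snd h
    rw [← restrict_glue D₁ (fun e => Iff.rfl), ← restrict_glue D₂ (fun e => Iff.rfl)]
    exact glue_congr h1 h2 _ _
  have hrange : Set.range Φ = {p | ∀ e, Q p.1 e (p.2 e)} := by
    ext p
    constructor
    · rintro ⟨D, rfl⟩
      intro e
      exact Iff.rfl
    · intro hp
      obtain ⟨D, F⟩ := p
      refine ⟨glue D F hp, ?_⟩
      simp only [hΦ]
      exact Prod.ext (glue_restrictBase D F hp)
        (funext fun e => glue_restrictCopy D F hp e)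
  have hfiber : ∀ (D : AcyclicOrientation G) (e : G.edgeSet),
      Nat.card {C : AcyclicOrientation (⊤ : SimpleGraph (Bool ⊕ Fin q)) // Q D e C} =
        (q+2).factorial / 2 := by
    intro D e
    have hc : Fintype.card (Bool ⊕ Fin q) = q + 2 := by
      simp only [Fintype.card_sum, Fintype.card_bool, Fintype.card_fin]
      omega
    have := card_ao_top_fixed (V := Bool ⊕ Fin q)
      (x := Sum.inl false) (y := Sum.inl true) (by simp)
      (D.dir (ept e false) (ept e true))
    rw [this, hc]
  calc Nat.card (AcyclicOrientation (edgeCorona G q))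
      = Nat.card (Set.range Φ) := Nat.card_congr (Equiv.ofInjective Φ hinj)
    _ = Nat.card {p : (AcyclicOrientation G) ×
          (∀ _ : G.edgeSet, AcyclicOrientation (⊤ : SimpleGraph (Bool ⊕ Fin q))) //
          ∀ e, Q p.1 e (p.2 e)} := by rw [hrange]; rfl
    _ = Nat.card (Σ D : AcyclicOrientation G,
          {F : ∀ _ : G.edgeSet, AcyclicOrientation (⊤ : SimpleGraph (Bool ⊕ Fin q)) //
            ∀ e, Q D e (F e)}) :=
        Nat.card_congr (Equiv.subtypeProdEquivSigmaSubtype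
          (fun (D : AcyclicOrientation G)
            (F : ∀ _ : G.edgeSet, AcyclicOrientation (⊤ : SimpleGraph (Bool ⊕ Fin q))) =>
              ∀ e, Q D e (F e)))
    _ = Nat.card (Σ D : AcyclicOrientation G,
          ∀ e : G.edgeSet, {C : AcyclicOrientation (⊤ : SimpleGraph (Bool ⊕ Fin q)) //
            Q D e C}) :=
        Nat.card_congr (Equiv.sigmaCongrRight (fun D => Equiv.subtypePiEquivPi))
    _ = ∑ D : AcyclicOrientation G, Nat.card (∀ e : G.edgeSet,
          {C : AcyclicOrientation (⊤ : SimpleGraph (Bool ⊕ Fin q)) // Q D e C}) :=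
        nat_card_sigma _
    _ = ∑ _D : AcyclicOrientation G, ((q+2).factorial / 2) ^ (Nat.card G.edgeSet) := by
        refine Finset.sum_congr rfl (fun D _ => ?_)
        rw [Nat.card_pi]
        rw [Finset.prod_congr rfl (fun e _ => hfiber D e), Finset.prod_const,
          Finset.card_univ, Nat.card_eq_fintype_card]
    _ = Nat.card (AcyclicOrientation G) * ((q+2).factorial / 2) ^ (Nat.card G.edgeSet) := by
        rw [Finset.sum_const, Finset.card_univ, smul_eq_mul]
        rw [Nat.card_eq_fintype_card (α := AcyclicOrientation G)]

end AO

namespace AO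
section EdgeCount
variable {V : Type} {G : SimpleGraph V} {q : ℕ}

theorem ept_pair' (e : G.edgeSet) {t t' : Bool} (hne : t ≠ t') :
    s(ept e t, ept e t') = (e : Sym2 V) := by
  cases t <;> cases t'
  · exact absurd rfl hne
  · exact ept_pair e
  · rw [Sym2.eq_swap]; exact ept_pair e
  · exact absurd rfl hne

/-- label of a corona edge: either a base edge (as `Sym2 V`) or the copy it belongs to -/
noncomputable def lbl : Sym2 (V ⊕ (G.edgeSet × Fin q)) → Sym2 V ⊕ Sym2 (G.edgeSet) :=
  Sym2.lift ⟨fun x y => match x, y with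
    | Sum.inl u, Sum.inl v => Sum.inl s(u, v)
    | Sum.inl _, Sum.inr p => Sum.inr s(p.1, p.1)
    | Sum.inr p, Sum.inl _ => Sum.inr s(p.1, p.1)
    | Sum.inr p, Sum.inr r => Sum.inr s(p.1, r.1),
    by
      rintro (u | p) (v | r)
      · exact congrArg Sum.inl Sym2.eq_swap
      · rfl
      · rfl
      · exact congrArg Sum.inr Sym2.eq_swap⟩

theorem lbl_map_inl (e : G.edgeSet) {t t' : Bool} (hne : t ≠ t') :
    lbl (Sym2.map (cpy (q := q) e) s(Sum.inl t, Sum.inl t')) = Sum.inl (e : Sym2 V) := by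
  rw [Sym2.map_pair_eq]
  show Sum.inl s(ept e t, ept e t') = _
  rw [ept_pair' e hne]

theorem lbl_map_mixl (e : G.edgeSet) (t : Bool) (j : Fin q) :
    lbl (Sym2.map (cpy e) s(Sum.inl t, Sum.inr j)) = Sum.inr s(e, e) := by
  rw [Sym2.map_pair_eq]; rfl

theorem lbl_map_mixr (e : G.edgeSet) (j : Fin q) (t : Bool) :
    lbl (Sym2.map (cpy e) s(Sum.inr j, Sum.inl t)) = Sum.inr s(e, e) := by
  rw [Sym2.map_pair_eq]; rfl

theorem lbl_map_inr (e : G.edgeSet) (i j : Fin q) :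
    lbl (Sym2.map (cpy e) s(Sum.inr i, Sum.inr j)) = Sum.inr s(e, e) := by
  rw [Sym2.map_pair_eq]; rfl

theorem lbl_map (e : G.edgeSet) {s : Sym2 (Bool ⊕ Fin q)}
    (hs : s ∈ (⊤ : SimpleGraph (Bool ⊕ Fin q)).edgeSet) :
    lbl (Sym2.map (cpy e) s) = Sum.inl (e : Sym2 V) ∨
      lbl (Sym2.map (cpy e) s) = Sum.inr s(e, e) := by
  obtain ⟨⟨x, y⟩, rfl⟩ := Quot.exists_rep s
  have hxy : x ≠ y := by
    have := (⊤ : SimpleGraph (Bool ⊕ Fin q)).mem_edgeSet.mp hs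
    exact this.ne
  rcases x with t | i <;> rcases y with t' | j
  · exact Or.inl (lbl_map_inl e (fun h => hxy (by rw [h])))
  · exact Or.inr (lbl_map_mixl e t j)
  · exact Or.inr (lbl_map_mixr e i t')
  · exact Or.inr (lbl_map_inr e i j)

theorem map_cpy_mem (e : G.edgeSet) {s : Sym2 (Bool ⊕ Fin q)}
    (hs : s ∈ (⊤ : SimpleGraph (Bool ⊕ Fin q)).edgeSet) :
    Sym2.map (cpy e) s ∈ (edgeCorona G q).edgeSet := by
  obtain ⟨⟨x, y⟩, rfl⟩ := Quot.exists_rep s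
  have hxy : x ≠ y := ((⊤ : SimpleGraph (Bool ⊕ Fin q)).mem_edgeSet.mp hs).ne
  rw [show Quot.mk _ (x, y) = s(x, y) from rfl, Sym2.map_pair_eq]
  exact (edgeCorona G q).mem_edgeSet.mpr ((cpy_adj e x y).mpr hxy)

noncomputable def edgeEquivFun :
    G.edgeSet × (⊤ : SimpleGraph (Bool ⊕ Fin q)).edgeSet → (edgeCorona G q).edgeSet :=
  fun p => ⟨Sym2.map (cpy p.1) p.2.1, map_cpy_mem p.1 p.2.2⟩

theorem edgeEquivFun_bijective :
    Function.Bijective (edgeEquivFun (G := G) (q := q)) := by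
  constructor
  · rintro ⟨e, s, hs⟩ ⟨e', s', hs'⟩ h
    have hmap : Sym2.map (cpy (q := q) e) s = Sym2.map (cpy e') s' :=
      congrArg Subtype.val h
    have hee : e = e' := by
      have hl := congrArg lbl hmap
      rcases lbl_map e hs with h1 | h1 <;> rcases lbl_map e' hs' with h2 | h2 <;>
        rw [h1, h2] at hl
      · exact Subtype.ext (Sum.inl.injEq _ _ ▸ hl)
      · exact absurd hl (by simp)
      · exact absurd hl (by simp)
      · have := Sum.inr.injEq .. ▸ hl
        rcases Sym2.eq_iff.mp this with ⟨h3, -⟩ | ⟨h3, -⟩ <;> exact h3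
    subst hee
    have : s = s' := Sym2.map.injective (cpy_injective e) hmap
    simp [Prod.ext_iff, Subtype.ext_iff, this]
  · rintro ⟨s, hs⟩
    obtain ⟨⟨x, y⟩, rfl⟩ := Quot.exists_rep s
    have hadj : (edgeCorona G q).Adj x y := (edgeCorona G q).mem_edgeSet.mp hs
    rcases x with u | ⟨e, i⟩ <;> rcases y with v | ⟨e', j⟩
    · have hGadj : G.Adj u v := hadj
      refine ⟨⟨⟨s(u, v), hGadj⟩, ⟨s(Sum.inl false, Sum.inl true), by simp⟩⟩, ?_⟩
      apply Subtype.ext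
      show Sym2.map (cpy _) s(Sum.inl false, Sum.inl true) = _
      rw [Sym2.map_pair_eq]
      show s(Sum.inl (ept _ false), Sum.inl (ept _ true)) = _
      rw [show (s(Sum.inl (ept (⟨s(u,v), hGadj⟩ : G.edgeSet) false),
          Sum.inl (ept (⟨s(u,v), hGadj⟩ : G.edgeSet) true)) : Sym2 (V ⊕ (G.edgeSet × Fin q))) =
          Sym2.map Sum.inl s(ept (⟨s(u,v), hGadj⟩ : G.edgeSet) false,
            ept (⟨s(u,v), hGadj⟩ : G.edgeSet) true) from (Sym2.map_pair_eq _ _ _).symm]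
      rw [ept_pair]
      exact Sym2.map_pair_eq Sum.inl u v
    · have hm : u ∈ (e' : Sym2 V) := hadj
      rcases mem_iff_ept.mp hm with h' | h' <;> subst h'
      · refine ⟨⟨e', ⟨s(Sum.inl false, Sum.inr j), by simp⟩⟩, ?_⟩
        apply Subtype.ext
        show Sym2.map (cpy e') s(Sum.inl false, Sum.inr j) = _
        rw [Sym2.map_pair_eq]
        rfl
      · refine ⟨⟨e', ⟨s(Sum.inl true, Sum.inr j), by simp⟩⟩, ?_⟩
        apply Subtype.ext
        show Sym2.map (cpy e') s(Sum.inl true, Sum.inr j) = _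
        rw [Sym2.map_pair_eq]
        rfl
    · have hm : v ∈ (e : Sym2 V) := hadj
      rcases mem_iff_ept.mp hm with h' | h' <;> subst h'
      · refine ⟨⟨e, ⟨s(Sum.inr i, Sum.inl false), by simp⟩⟩, ?_⟩
        apply Subtype.ext
        show Sym2.map (cpy e) s(Sum.inr i, Sum.inl false) = _
        rw [Sym2.map_pair_eq]
        rfl
      · refine ⟨⟨e, ⟨s(Sum.inr i, Sum.inl true), by simp⟩⟩, ?_⟩
        apply Subtype.ext
        show Sym2.map (cpy e) s(Sum.inr i, Sum.inl true) = _
        rw [Sym2.map_pair_eq]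
        rfl
    · obtain ⟨h1, h2⟩ := hadj
      dsimp at h1
      subst h1
      refine ⟨⟨e, ⟨s(Sum.inr i, Sum.inr j), by simpa using h2⟩⟩, ?_⟩
      apply Subtype.ext
      show Sym2.map (cpy e) s(Sum.inr i, Sum.inr j) = _
      rw [Sym2.map_pair_eq]
      rfl

theorem card_edges_corona [Finite V] (G : SimpleGraph V) (q : ℕ) :
    Nat.card (edgeCorona G q).edgeSet = Nat.card G.edgeSet * ((q+2).choose 2) := by
  classical
  rw [← Nat.card_congr (Equiv.ofBijective _ (edgeEquivFun_bijective (G := G) (q := q))),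
    Nat.card_prod]
  congr 1
  letI : Fintype (Bool ⊕ Fin q) := inferInstance
  rw [Nat.card_eq_fintype_card, ← SimpleGraph.edgeFinset_card,
    SimpleGraph.card_edgeFinset_top_eq_card_choose_two]
  congr 1
  simp only [Fintype.card_sum, Fintype.card_bool, Fintype.card_fin]
  omega

end EdgeCount
end AO

namespace AO

instance GVert.finite (q g : ℕ) : Finite (GVert q g) := by
  induction g with
  | zero => exact inferInstanceAs (Finite (Fin (q+2)))
  | succ g ih =>
    haveI := ih
    exact inferInstanceAs (Finite ((Gaux q g).1 ⊕ ((Gaux q g).2.edgeSet × Fin q)))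

theorem M_pos (q : ℕ) : 0 < (q+1)*(q+2)/2 := Nat.div_pos (by nlinarith) (by norm_num)

theorem two_mul_M (q : ℕ) : 2 * ((q+1)*(q+2)/2) = (q+1)*(q+2) :=
  Nat.mul_div_cancel' (Nat.even_mul_succ_self (q+1)).two_dvd

theorem hD (q : ℕ) : 2 * ((q+1)*(q+2)/2 - 1) = q*(q+3) := by
  have h1 := two_mul_M q
  have h2 : (q+1)*(q+2) = q*(q+3) + 2 := by ring
  rw [h2] at h1
  generalize hM : (q+1)*(q+2)/2 = M at h1 ⊢
  generalize hX : q*(q+3) = X at h1 ⊢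
  omega

theorem Dpos (q : ℕ) (hq : 1 ≤ q) : 0 < q*(q+3) := Nat.mul_pos (by omega) (by omega)

theorem keyA (q : ℕ) (hq : 1 ≤ q) : ∀ g, (q*(q+3)) * expE q g =
    2 * (((q+1)*(q+2)/2) ^ (g+1) - 1) := by
  intro g
  induction g with
  | zero =>
    simp only [expE, Nat.zero_add, pow_one]
    rw [hD q, Nat.div_self (Dpos q hq), mul_one]
  | succ g ih =>
    have h1 : 1 ≤ ((q+1)*(q+2)/2)^(g+1) := Nat.one_le_pow _ _ (M_pos q)
    have h2 : 1 ≤ ((q+1)*(q+2)/2)^(g+1+1) := Nat.one_le_pow _ _ (M_pos q)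
    have h3 : 1 ≤ (q+1)*(q+2)/2 := M_pos q
    have e1 : 2 * (((q+1)*(q+2)/2)^(g+1+1) - 1)
        = ((q+1)*(q+2)/2) * (2 * (((q+1)*(q+2)/2)^(g+1) - 1)) + 2*((q+1)*(q+2)/2 - 1) := by
      zify [h1, h2, h3]
      ring
    have e2 : 2 * (((q+1)*(q+2)/2)^(g+1+1) - 1)
        = (q*(q+3)) * (((q+1)*(q+2)/2) * expE q g + 1) := by
      rw [e1, ← ih, hD q]
      ring
    have e3 : expE q (g+1) = ((q+1)*(q+2)/2) * expE q g + 1 := by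
      show (2 * (((q + 1) * (q + 2) / 2) ^ (g + 1 + 1) - 1)) / (q * (q + 3)) = _
      rw [e2, Nat.mul_div_cancel_left _ (Dpos q hq)]
    rw [e3]
    exact e2.symm

theorem expE_zero (q : ℕ) (hq : 1 ≤ q) : expE q 0 = 1 := by
  have h := keyA q hq 0
  rw [pow_one, hD q] at h
  have h2 : q*(q+3) * expE q 0 = q*(q+3) * 1 := by rw [mul_one]; exact h
  exact Nat.eq_of_mul_eq_mul_left (Dpos q hq) h2

theorem expE_succ (q : ℕ) (hq : 1 ≤ q) (g : ℕ) :
    expE q (g+1) = expE q g + ((q+1)*(q+2)/2)^(g+1) := by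
  have h1 : 1 ≤ ((q+1)*(q+2)/2)^(g+1) := Nat.one_le_pow _ _ (M_pos q)
  have h2 : 1 ≤ ((q+1)*(q+2)/2)^(g+1+1) := Nat.one_le_pow _ _ (M_pos q)
  have h3 : 1 ≤ (q+1)*(q+2)/2 := M_pos q
  apply Nat.eq_of_mul_eq_mul_left (Dpos q hq)
  rw [keyA q hq (g+1), mul_add (q*(q+3)), keyA q hq g, ← hD q]
  zify [h1, h2, h3]
  ring

theorem card_edges_Gnet (q g : ℕ) :
    Nat.card (Gnet q g).edgeSet = ((q+1)*(q+2)/2)^(g+1) := by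
  induction g with
  | zero =>
    show Nat.card (⊤ : SimpleGraph (Fin (q+2))).edgeSet = _
    rw [Nat.card_eq_fintype_card, ← SimpleGraph.edgeFinset_card,
      SimpleGraph.card_edgeFinset_top_eq_card_choose_two, Fintype.card_fin,
      Nat.choose_two_right, pow_one, show q + 2 - 1 = q + 1 by omega,
      Nat.mul_comm (q+2) (q+1)]
  | succ g ih =>
    show Nat.card (edgeCorona (Gnet q g) q).edgeSet = _
    rw [card_edges_corona (Gnet q g) q, ih, Nat.choose_two_right,
      show q + 2 - 1 = q + 1 by omega, Nat.mul_comm (q+2) (q+1), ← pow_succ]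

end AO


/-- For all `g ≥ 0`, `q ≥ 1`, the number of acyclic orientations of `G_q(g)` is
`2 · ((q+2)!/2)^{E(g,q)}`. -/
theorem card_acyclicOrientations (q g : ℕ) (hq : 1 ≤ q) :
    Nat.card (AcyclicOrientation (Gnet q g)) =
      2 * (Nat.factorial (q + 2) / 2) ^ expE q g := by
  have hdvd2 : 2 ∣ Nat.factorial (q+2) := Nat.dvd_factorial (by norm_num) (by omega)
  induction g with
  | zero =>
    have h0 : Nat.card (AcyclicOrientation (Gnet q 0)) = Nat.factorial (q+2) := by
      show Nat.card (AcyclicOrientation (⊤ : SimpleGraph (Fin (q+2)))) = _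
      rw [AO.card_ao_top, Fintype.card_fin]
    rw [h0, AO.expE_zero q hq, pow_one, Nat.mul_div_cancel' hdvd2]
  | succ g ih =>
    have hstep := AO.card_step (Gnet q g) q
    show Nat.card (AcyclicOrientation (edgeCorona (Gnet q g) q)) = _
    rw [hstep, ih, AO.card_edges_Gnet q g, AO.expE_succ q hq g, pow_add]
    ring
end
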